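/- MSPA optimality for independent codewords (abstract greedy max-min theorem): Let P : V × V → ℝ≥0 be received powers on a finite node set V with source s and destination d. For a route (ordered sequence of distinct nodes) M = (m_1 = s, m_2, …, m_k = d), define its rate as min over t ∈ {2,…,k} of Σ_{i<t} P(m_i, m_t). The greedy route constructed by repeatedly appending a node a* maximizing Σ_{i ∈ current route} P(i, a*) over all remaining nodes (stopping when d is appended) achieves rate at least that of every route from s to d. -/

import Mathlib

/-- The supported rate of a route `m : Fin k → V` (with `2 ≤ k`): the minimum, over
non-source positions `t`, of the sum of received powers from all earlier positions. -/
noncomputable def supportedRate {V : Type*} (P : V → V → ℝ) (k : ℕ) (hk : 2 ≤ k)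
    (m : Fin k → V) : ℝ :=
  Finset.inf' (Finset.univ.filter fun t : Fin k => 1 ≤ (t : ℕ))
    ⟨⟨1, by omega⟩, by simp⟩
    (fun t => ∑ i ∈ Finset.univ.filter (fun i : Fin k => (i : ℕ) < (t : ℕ)), P (m i) (m t))

/-- MSPA optimality for independent codewords: any greedy route (each appended node
maximizes the sum of received power from the current partial route, stopping when `d`
is appended) achieves a supported rate at least that of every route from `s` to `d`. -/
theorem mspa_optimal {V : Type*} [Fintype V] [DecidableEq V]
    (P : V → V → ℝ) (hP : ∀ i j, 0 ≤ P i j) (s d : V) (hsd : s ≠ d)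
    -- the greedy (MSPA) route g
    (k : ℕ) (hk : 2 ≤ k) (g : Fin k → V) (hginj : Function.Injective g)
    (hg0 : g ⟨0, by omega⟩ = s) (hglast : g ⟨k - 1, by omega⟩ = d)
    (hgmid : ∀ t : Fin k, (t : ℕ) < k - 1 → g t ≠ d)
    (hgreedy : ∀ t : Fin k, 1 ≤ (t : ℕ) → ∀ v : V,
      (∀ i : Fin k, (i : ℕ) < (t : ℕ) → g i ≠ v) →
      ∑ i ∈ Finset.univ.filter (fun i : Fin k => (i : ℕ) < (t : ℕ)), P (g i) v ≤
      ∑ i ∈ Finset.univ.filter (fun i : Fin k => (i : ℕ) < (t : ℕ)), P (g i) (g t))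
    -- an arbitrary route r
    (n : ℕ) (hn : 2 ≤ n) (r : Fin n → V) (hrinj : Function.Injective r)
    (hr0 : r ⟨0, by omega⟩ = s) (hrlast : r ⟨n - 1, by omega⟩ = d) :
    supportedRate P n hn r ≤ supportedRate P k hk g := by
  unfold supportedRate
  apply Finset.le_inf'
  intro t ht
  simp only [Finset.mem_filter, Finset.mem_univ, true_and] at ht
  -- the greedy prefix before position t avoids d
  have hd : ∀ i : Fin k, (i : ℕ) < (t : ℕ) → g i ≠ d := by
    intro i hi
    exact hgmid i (by have := t.isLt; omega)
  -- T : positions of r whose node is not in the greedy prefix before t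
  set T : Finset (Fin n) :=
    Finset.univ.filter (fun u => ∀ i : Fin k, (i : ℕ) < (t : ℕ) → g i ≠ r u) with hT
  have hlastT : (⟨n - 1, by omega⟩ : Fin n) ∈ T := by
    simp only [hT, Finset.mem_filter, Finset.mem_univ, true_and]
    intro i hi
    rw [hrlast]
    exact hd i hi
  have hTne : T.Nonempty := ⟨_, hlastT⟩
  set u := T.min' hTne with hu
  have huT : u ∈ T := T.min'_mem hTne
  have huT' : ∀ i : Fin k, (i : ℕ) < (t : ℕ) → g i ≠ r u := by
    simpa only [hT, Finset.mem_filter, Finset.mem_univ, true_and] using huT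
  have hu1 : 1 ≤ (u : ℕ) := by
    by_contra h
    push_neg at h
    have hu0' : (u : ℕ) = 0 := by omega
    have hu0 : u = (⟨0, by omega⟩ : Fin n) := Fin.ext (by simp [hu0'])
    exact huT' ⟨0, by omega⟩ (by omega) (by rw [hg0, hu0, hr0])
  -- every r-position before u lies in the greedy prefix
  have hbefore : ∀ i : Fin n, (i : ℕ) < (u : ℕ) →
      ∃ j : Fin k, (j : ℕ) < (t : ℕ) ∧ g j = r i := by
    intro i hi
    by_contra hcon
    push_neg at hcon
    have hiT : i ∈ T := by
      simp only [hT, Finset.mem_filter, Finset.mem_univ, true_and]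
      intro j hj
      exact hcon j hj
    have := T.min'_le i hiT
    rw [← hu] at this
    exact absurd (Fin.le_iff_val_le_val.mp this) (by omega)
  refine Finset.inf'_le_of_le _ (b := u) ?_ ?_
  · simp only [Finset.mem_filter, Finset.mem_univ, true_and]
    exact hu1
  · -- key chain of inequalities
    have hsub : (Finset.univ.filter fun i : Fin n => (i : ℕ) < (u : ℕ)).image r ⊆
        (Finset.univ.filter fun j : Fin k => (j : ℕ) < (t : ℕ)).image g := by
      intro x hx
      simp only [Finset.mem_image, Finset.mem_filter, Finset.mem_univ, true_and] at hx ⊢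
      obtain ⟨i, hi, hix⟩ := hx
      obtain ⟨j, hj, hji⟩ := hbefore i hi
      exact ⟨j, hj, by rw [hji, hix]⟩
    calc ∑ i ∈ Finset.univ.filter (fun i : Fin n => (i : ℕ) < (u : ℕ)), P (r i) (r u)
        = ∑ x ∈ (Finset.univ.filter fun i : Fin n => (i : ℕ) < (u : ℕ)).image r,
            P x (r u) := by
          rw [Finset.sum_image (fun a _ b _ hab => hrinj hab)]
      _ ≤ ∑ x ∈ (Finset.univ.filter fun j : Fin k => (j : ℕ) < (t : ℕ)).image g,
            P x (r u) :=
          Finset.sum_le_sum_of_subset_of_nonneg hsub (fun x _ _ => hP x (r u))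
      _ = ∑ j ∈ Finset.univ.filter (fun j : Fin k => (j : ℕ) < (t : ℕ)), P (g j) (r u) := by
          rw [Finset.sum_image (fun a _ b _ hab => hginj hab)]
      _ ≤ ∑ j ∈ Finset.univ.filter (fun j : Fin k => (j : ℕ) < (t : ℕ)), P (g j) (g t) :=
          hgreedy t ht (r u) huT'
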